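/- (Proposition 5.1.) Let Ω ⊆ ℝ^n be open, a ∈ (-1,1), λ > 0, and let u be a solution of the extension form of the fractional plasma equation on Ω satisfying in addition ∂_y u(x,y) ≤ 0 for all (x,y) ∈ Ω × (0,∞). Then the topological boundary, relative to Ω, of the set {x ∈ Ω : u(x,0) < 0} is contained in the topological boundary, relative to Ω, of the set {x ∈ Ω : u(x,0) > 0}. -/

import Mathlib

open MeasureTheory Filter Set Metric
open scoped RealInnerProductSpace NNReal ENNReal

noncomputable section

/-- `ℝⁿ` as a Euclidean space. -/
abbrev Rn (n : ℕ) := EuclideanSpace ℝ (Fin n)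

/-- The point `(x, t) ∈ ℝⁿ × ℝ = ℝ^{n+1}`. -/
def emb {n : ℕ} (x : Rn n) (t : ℝ) : Rn (n + 1) :=
  WithLp.toLp 2 (Fin.snoc (α := fun _ => ℝ) (WithLp.ofLp x) t)

/-- The horizontal part `x` of a point `z = (x,y) ∈ ℝ^{n+1}`. -/
def xpart {n : ℕ} (z : Rn (n + 1)) : Rn n := WithLp.toLp 2 (fun i : Fin n => z i.castSucc)

/-- The last (vertical) coordinate `y` of a point `z = (x,y) ∈ ℝ^{n+1}`. -/
def ycoord {n : ℕ} (z : Rn (n + 1)) : ℝ := z (Fin.last n)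

/-- The partial derivative `∂_y f` in the last coordinate. -/
def pdy {n : ℕ} (f : Rn (n + 1) → ℝ) (z : Rn (n + 1)) : ℝ :=
  fderiv ℝ f z (EuclideanSpace.single (Fin.last n) 1)

/-- The Laplacian `Δf = ∑ ∂²f/∂x_i²` on `ℝᵐ`. -/
def lap {m : ℕ} (f : Rn m → ℝ) (z : Rn m) : ℝ :=
  ∑ i : Fin m, fderiv ℝ (fun w => fderiv ℝ f w (EuclideanSpace.single i 1)) z
    (EuclideanSpace.single i 1)

/-- The upper half-ball `B_r⁺ = B_r ∩ {y > 0} ⊂ ℝ^{n+1}`. -/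
def Bplus (n : ℕ) (r : ℝ) : Set (Rn (n + 1)) := {z | ‖z‖ < r ∧ 0 < ycoord z}

/-- The upper hemisphere `(∂B_r)⁺ = ∂B_r ∩ {y > 0} ⊂ ℝ^{n+1}`. -/
def Splus (n : ℕ) (r : ℝ) : Set (Rn (n + 1)) := {z | ‖z‖ = r ∧ 0 < ycoord z}

/-- The thin ball `B'_r × {0} ⊂ ℝ^{n+1}`. -/
def Thin (n : ℕ) (r : ℝ) : Set (Rn (n + 1)) := {z | ‖xpart z‖ < r ∧ ycoord z = 0}

/-- `v` is `C²` and `a`-harmonic (`div(|y|^a ∇v) = 0`, equivalently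
`|y|·Δv + a·sign(y)·∂_y v = 0`) on a set `U ⊆ {y ≠ 0}`. -/
def AHarmonicOn {n : ℕ} (a : ℝ) (v : Rn (n + 1) → ℝ) (U : Set (Rn (n + 1))) : Prop :=
  ContDiffOn ℝ 2 v U ∧
    ∀ z ∈ U, |ycoord z| * lap v z + a * Real.sign (ycoord z) * pdy v z = 0

/-- A solution of the extension form of the fractional plasma equation on an open set
`D ⊆ ℝⁿ`: `u` is continuous on `D × [0,∞)`, `C²` and `a`-harmonic on `D × (0,∞)`, and
`y^a ∂_y u(x,y) → -λ·u₊(x,0)` as `y → 0⁺`, locally uniformly in `x ∈ D`. -/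
def ExtSol {n : ℕ} (a lam : ℝ) (D : Set (Rn n)) (u : Rn (n + 1) → ℝ) : Prop :=
  ContinuousOn u {z | xpart z ∈ D ∧ 0 ≤ ycoord z} ∧
  AHarmonicOn a u {z | xpart z ∈ D ∧ 0 < ycoord z} ∧
  TendstoLocallyUniformlyOn (fun y x => y ^ a * pdy u (emb x y))
    (fun x => -lam * max (u (emb x 0)) 0) (nhdsWithin 0 (Set.Ioi 0)) D

/-- The horizontal gradient `∇ₓ f = (∂f/∂x_1, …, ∂f/∂x_n)` of `f : ℝ^{n+1} → ℝ`. -/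
def gradX {n : ℕ} (f : Rn (n + 1) → ℝ) (z : Rn (n + 1)) : Rn n :=
  WithLp.toLp 2 (fun i : Fin n => fderiv ℝ f z (EuclideanSpace.single i.castSucc 1))

/-- The outward radial derivative `∂_ν f(z) = ⟨∇f(z), z/‖z‖⟩`. -/
def rder {n : ℕ} (f : Rn (n + 1) → ℝ) (z : Rn (n + 1)) : ℝ :=
  fderiv ℝ f z (‖z‖⁻¹ • z)

namespace S5
variable {n : ℕ}



lemma xpart_emb (x : Rn n) (t : ℝ) : xpart (emb x t) = x := by
  ext i; simp [xpart, emb, Fin.snoc_castSucc]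

lemma ycoord_emb (x : Rn n) (t : ℝ) : ycoord (emb x t) = t := by
  simp [ycoord, emb]

lemma emb_xpart_ycoord (z : Rn (n+1)) : emb (xpart z) (ycoord z) = z := by
  ext i
  refine Fin.lastCases ?_ ?_ i
  · simp [emb, ycoord]
  · intro j; simp [emb, xpart, Fin.snoc_castSucc]

lemma emb_eq (x : Rn n) (t : ℝ) :
    emb x t = emb x 0 + t • (EuclideanSpace.single (Fin.last n) 1) := by
  ext i
  rw [PiLp.add_apply, PiLp.smul_apply, EuclideanSpace.single_apply]
  refine Fin.lastCases ?_ ?_ i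
  · simp [emb]
  · intro j
    have : (j.castSucc : Fin (n+1)) ≠ Fin.last n := Fin.castSucc_lt_last j |>.ne
    simp [emb, Fin.snoc_castSucc, this]

lemma hasDerivAt_emb (x : Rn n) (t : ℝ) :
    HasDerivAt (fun s => emb x s) (EuclideanSpace.single (Fin.last n) 1) t := by
  have : (fun s => emb x s) = fun s => emb x 0 + s • (EuclideanSpace.single (Fin.last n) 1) := by
    funext s; exact emb_eq x s
  rw [this]
  simpa using ((hasDerivAt_id t).smul_const (EuclideanSpace.single (Fin.last n) (1:ℝ))).const_add (emb x 0)

lemma continuous_emb (x : Rn n) : Continuous (fun t => emb x t) := by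
  have h := fun t => emb_eq x t
  rw [funext h]
  exact continuous_const.add (continuous_id.smul continuous_const)

lemma norm_sq_split (z : Rn (n+1)) : ‖z‖^2 = ‖xpart z‖^2 + (ycoord z)^2 := by
  have h1 : ‖z‖^2 = ∑ i : Fin (n+1), (z i)^2 := by
    rw [EuclideanSpace.norm_eq]
    rw [Real.sq_sqrt (by positivity)]
    simp [Real.norm_eq_abs, sq_abs]
  have h2 : ‖xpart z‖^2 = ∑ i : Fin n, (z i.castSucc)^2 := by
    rw [EuclideanSpace.norm_eq]
    rw [Real.sq_sqrt (by positivity)]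
    simp [Real.norm_eq_abs, sq_abs, xpart]
  rw [h1, h2, Fin.sum_univ_castSucc]
  rfl

lemma xpart_sub (z w : Rn (n+1)) : xpart (z - w) = xpart z - xpart w := by
  ext i; simp [xpart, PiLp.sub_apply]

lemma ycoord_sub (z w : Rn (n+1)) : ycoord (z - w) = ycoord z - ycoord w := by
  simp [ycoord, PiLp.sub_apply]

lemma norm_xpart_le (z : Rn (n+1)) : ‖xpart z‖ ≤ ‖z‖ := by
  have h := norm_sq_split z
  nlinarith [norm_nonneg (xpart z), norm_nonneg z, sq_nonneg (ycoord z)]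

lemma ycoord_le_norm (z : Rn (n+1)) : ycoord z ≤ ‖z‖ := by
  have h := norm_sq_split z
  nlinarith [norm_nonneg (xpart z), norm_nonneg z, le_abs_self (ycoord z), sq_abs (ycoord z), abs_nonneg (ycoord z)]

lemma continuous_ycoord : Continuous (ycoord (n := n)) := by
  exact (PiLp.proj (𝕜 := ℝ) 2 (fun _ : Fin (n+1) => ℝ) (Fin.last n)).continuous

lemma lipschitz_xpart : LipschitzWith 1 (xpart (n := n)) := by
  apply LipschitzWith.of_dist_le_mul
  intro z w
  rw [dist_eq_norm, dist_eq_norm, ← xpart_sub]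
  simpa using norm_xpart_le (z - w)

lemma continuous_xpart : Continuous (xpart (n := n)) := lipschitz_xpart.continuous


variable {m : ℕ}

lemma exists_open_c2 {f : Rn m → ℝ} {z : Rn m} (hf : ContDiffAt ℝ 2 f z) :
    ∃ O, IsOpen O ∧ z ∈ O ∧ ContDiffOn ℝ 2 f O := by
  obtain ⟨u, hu, hcd⟩ := hf.contDiffOn (le_refl 2) (by norm_num)
  exact ⟨interior u, isOpen_interior, mem_interior_iff_mem_nhds.2 hu,
    hcd.mono interior_subset⟩

lemma diffAt_dirderiv {f : Rn m → ℝ} {z : Rn m} (hf : ContDiffAt ℝ 2 f z) (e : Rn m) :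
    DifferentiableAt ℝ (fun w => fderiv ℝ f w e) z := by
  obtain ⟨O, hO, hzO, hfO⟩ := exists_open_c2 hf
  have hF : ContDiffOn ℝ 1 (fderiv ℝ f) O := hfO.fderiv_of_isOpen hO (by norm_num)
  have : DifferentiableAt ℝ (fderiv ℝ f) z :=
    ((hF.differentiableOn one_ne_zero).differentiableAt (hO.mem_nhds hzO))
  exact this.clm_apply (differentiableAt_const e)

lemma eventually_diffAt {f : Rn m → ℝ} {z : Rn m} (hf : ContDiffAt ℝ 2 f z) :
    ∀ᶠ w in nhds z, DifferentiableAt ℝ f w := by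
  obtain ⟨O, hO, hzO, hfO⟩ := exists_open_c2 hf
  filter_upwards [hO.mem_nhds hzO] with w hw
  exact (hfO.differentiableOn (by norm_num)).differentiableAt (hO.mem_nhds hw)

lemma dd_add {f g : Rn m → ℝ} {z : Rn m} (hf : ContDiffAt ℝ 2 f z)
    (hg : ContDiffAt ℝ 2 g z) (e e' : Rn m) :
    fderiv ℝ (fun w => fderiv ℝ (fun w => f w + g w) w e) z e'
      = fderiv ℝ (fun w => fderiv ℝ f w e) z e' + fderiv ℝ (fun w => fderiv ℝ g w e) z e' := by
  have hev : (fun w => fderiv ℝ (fun w => f w + g w) w e)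
      =ᶠ[nhds z] (fun w => fderiv ℝ f w e + fderiv ℝ g w e) := by
    filter_upwards [eventually_diffAt hf, eventually_diffAt hg] with w hfw hgw
    rw [fderiv_fun_add hfw hgw]; rfl
  rw [hev.fderiv_eq, fderiv_fun_add (diffAt_dirderiv hf e) (diffAt_dirderiv hg e)]
  rfl

lemma dd_cmul {f : Rn m → ℝ} {z : Rn m} (hf : ContDiffAt ℝ 2 f z) (c : ℝ) (e e' : Rn m) :
    fderiv ℝ (fun w => fderiv ℝ (fun w => c * f w) w e) z e'
      = c * fderiv ℝ (fun w => fderiv ℝ f w e) z e' := by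
  have hev : (fun w => fderiv ℝ (fun w => c * f w) w e)
      =ᶠ[nhds z] (fun w => c * fderiv ℝ f w e) := by
    filter_upwards [eventually_diffAt hf] with w hfw
    rw [fderiv_const_mul hfw]; rfl
  rw [hev.fderiv_eq, fderiv_const_mul (diffAt_dirderiv hf e)]; rfl

lemma lap_comb {f g h : Rn m → ℝ} {z : Rn m} (hf : ContDiffAt ℝ 2 f z)
    (hg : ContDiffAt ℝ 2 g z) (hh : ContDiffAt ℝ 2 h z) (b c : ℝ) :
    lap (fun w => f w + (b * g w + c * h w)) z
      = lap f z + (b * lap g z + c * lap h z) := by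
  have hgh : ContDiffAt ℝ 2 (fun w => b * g w + c * h w) z :=
    (contDiffAt_const.mul hg).add (contDiffAt_const.mul hh)
  unfold lap
  have key : ∀ i : Fin m,
      fderiv ℝ (fun w => fderiv ℝ (fun w => f w + (b * g w + c * h w)) w
        (EuclideanSpace.single i 1)) z (EuclideanSpace.single i 1)
      = fderiv ℝ (fun w => fderiv ℝ f w (EuclideanSpace.single i 1)) z (EuclideanSpace.single i 1)
        + (b * fderiv ℝ (fun w => fderiv ℝ g w (EuclideanSpace.single i 1)) z
            (EuclideanSpace.single i 1)
          + c * fderiv ℝ (fun w => fderiv ℝ h w (EuclideanSpace.single i 1)) z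
            (EuclideanSpace.single i 1)) := by
    intro i
    rw [dd_add hf hgh, dd_add (contDiffAt_const.mul hg) (contDiffAt_const.mul hh),
      dd_cmul hg, dd_cmul hh]
  rw [Finset.sum_congr rfl (fun i _ => key i)]
  rw [Finset.sum_add_distrib, Finset.sum_add_distrib, ← Finset.mul_sum, ← Finset.mul_sum]

lemma pdy_comb {f g h : Rn (m+1) → ℝ} {z : Rn (m+1)} (hf : DifferentiableAt ℝ f z)
    (hg : DifferentiableAt ℝ g z) (hh : DifferentiableAt ℝ h z) (b c : ℝ) :
    pdy (fun w => f w + (b * g w + c * h w)) z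
      = pdy f z + (b * pdy g z + c * pdy h z) := by
  unfold pdy
  rw [fderiv_fun_add (g := fun w => b * g w + c * h w) hf ((hg.const_mul b).add (hh.const_mul c)),
    fderiv_fun_add (hg.const_mul b) (hh.const_mul c), fderiv_const_mul hg, fderiv_const_mul hh]
  simp

lemma second_deriv_test {f : Rn m → ℝ} {z : Rn m} (hf : ContDiffAt ℝ 2 f z)
    (hmax : IsLocalMax f z) (e : Rn m) :
    fderiv ℝ (fun w => fderiv ℝ f w e) z e ≤ 0 := by
  by_contra hc
  push_neg at hc
  set c := fderiv ℝ (fun w => fderiv ℝ f w e) z e with hcdef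
  obtain ⟨O, hO, hzO, hfO⟩ := exists_open_c2 hf
  set g : ℝ → ℝ := fun t => f (z + t • e) with hgdef
  set g₁ : ℝ → ℝ := fun t => fderiv ℝ f (z + t • e) e with hg1def
  have h0 : z + (0:ℝ) • e = z := by simp
  have hline : ∀ t : ℝ, HasDerivAt (fun s : ℝ => z + s • e) e t := fun t => by
    simpa using ((hasDerivAt_id t).smul_const e).const_add z
  have hcont0 : ContinuousAt (fun s : ℝ => z + s • e) 0 := (hline 0).continuousAt
  have hmemO : ∀ᶠ t in nhds (0:ℝ), z + t • e ∈ O := by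
    have : Filter.Tendsto (fun s : ℝ => z + s • e) (nhds 0) (nhds z) := by
      simpa [h0] using hcont0.tendsto
    exact this.eventually (hO.eventually_mem hzO)
  have hg : ∀ᶠ t in nhds (0:ℝ), HasDerivAt g (g₁ t) t := by
    filter_upwards [hmemO] with t ht
    have hdiff : DifferentiableAt ℝ f (z + t • e) :=
      (hfO.differentiableOn (by norm_num)).differentiableAt (hO.mem_nhds ht)
    exact hdiff.hasFDerivAt.comp_hasDerivAt t (hline t)
  have hg1' : HasDerivAt g₁ c 0 := by
    have hd : DifferentiableAt ℝ (fun w => fderiv ℝ f w e) z := diffAt_dirderiv hf e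
    have hpt : HasFDerivAt (fun w => fderiv ℝ f w e)
        (fderiv ℝ (fun w => fderiv ℝ f w e) z) (z + (0:ℝ) • e) := by
      rw [h0]; exact hd.hasFDerivAt
    exact hpt.comp_hasDerivAt 0 (hline 0)
  have hmaxg : IsLocalMax g 0 := by
    have ht : Filter.Tendsto (fun s : ℝ => z + s • e) (nhds 0) (nhds z) := by
      simpa [h0] using hcont0.tendsto
    have := ht.eventually hmax
    unfold IsLocalMax IsMaxFilter
    filter_upwards [this] with t ht'
    simpa [hgdef, h0] using ht'
  have hg10 : g₁ 0 = 0 := hmaxg.hasDerivAt_eq_zero (hg.self_of_nhds)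
  -- slope of g₁ tends to c > 0
  have hslope := hasDerivAt_iff_tendsto_slope.mp hg1'
  have hpos : ∀ᶠ t in nhdsWithin (0:ℝ) (Set.Ioi 0), 0 < g₁ t := by
    have hev : ∀ᶠ t in nhdsWithin (0:ℝ) {(0:ℝ)}ᶜ, 0 < slope g₁ 0 t :=
      hslope.eventually (eventually_gt_nhds hc)
    have hev2 : ∀ᶠ t in nhdsWithin (0:ℝ) (Set.Ioi 0), 0 < slope g₁ 0 t :=
      hev.filter_mono (nhdsWithin_mono _ (fun t ht => ne_of_gt ht))
    filter_upwards [hev2, self_mem_nhdsWithin] with t ht ht0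
    have hts : slope g₁ 0 t = g₁ t / t := by
      rw [slope_def_field, hg10, sub_zero, sub_zero]
    rw [hts] at ht
    have ht0' : (0:ℝ) < t := ht0
    rcases div_pos_iff.mp ht with ⟨h1, _⟩ | ⟨_, h2⟩
    · exact h1
    · linarith
  obtain ⟨η₁, hη₁, hball₁⟩ := Metric.mem_nhdsWithin_iff.mp hpos
  obtain ⟨η₂, hη₂, hball₂⟩ := Metric.eventually_nhds_iff_ball.mp hg
  obtain ⟨η₃, hη₃, hball₃⟩ := Metric.eventually_nhds_iff_ball.mp hmaxg
  set η := min η₁ (min η₂ η₃) / 2 with hηdef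
  have hη : 0 < η := by positivity
  have hηlt₁ : η < η₁ := by
    have : min η₁ (min η₂ η₃) ≤ η₁ := min_le_left _ _
    simp only [hηdef]; linarith
  have hηlt₂ : η < η₂ := by
    have h := min_le_right η₁ (min η₂ η₃)
    have h2 := min_le_left η₂ η₃
    simp only [hηdef]; linarith
  have hηlt₃ : η < η₃ := by
    have h := min_le_right η₁ (min η₂ η₃)
    have h2 := min_le_right η₂ η₃
    simp only [hηdef]; linarith
  have hder : ∀ t ∈ Set.Icc (0:ℝ) η, HasDerivAt g (g₁ t) t := by
    intro t ht
    apply hball₂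
    rw [Metric.mem_ball, Real.dist_eq, sub_zero, abs_of_nonneg ht.1]
    linarith [ht.2]
  have hcont : ContinuousOn g (Set.Icc 0 η) := fun t ht =>
    (hder t ht).continuousAt.continuousWithinAt
  have hderiv_pos : ∀ t ∈ interior (Set.Icc (0:ℝ) η), 0 < deriv g t := by
    intro t ht
    rw [interior_Icc] at ht
    rw [(hder t ⟨ht.1.le, ht.2.le⟩).deriv]
    apply hball₁
    constructor
    · rw [Metric.mem_ball, Real.dist_eq, sub_zero, abs_of_pos ht.1]
      linarith [ht.2]
    · exact ht.1
  have hmono := strictMonoOn_of_deriv_pos (convex_Icc 0 η) hcont hderiv_pos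
  have h1 : g 0 < g η := hmono ⟨le_rfl, hη.le⟩ ⟨hη.le, le_rfl⟩ hη
  have h2 : g η ≤ g 0 := by
    apply hball₃
    rw [Metric.mem_ball, Real.dist_eq, sub_zero, abs_of_pos hη]
    linarith
  linarith


variable {m : ℕ}

def qf (p : Rn m) : Rn m → ℝ := fun z => ∑ j, (z j - p j)^2

def Dq (p : Rn m) (z : Rn m) : Rn m →L[ℝ] ℝ :=
  ∑ j, (2 * (z j - p j) ^ 1) • (EuclideanSpace.proj (𝕜 := ℝ) j)

lemma Dq_apply (p z : Rn m) (i : Fin m) :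
    Dq p z (EuclideanSpace.single i 1) = 2 * (z i - p i) := by
  unfold Dq
  rw [ContinuousLinearMap.sum_apply]
  have : ∀ j : Fin m, ((2 * (z j - p j) ^ 1) • (EuclideanSpace.proj (𝕜 := ℝ) j))
      (EuclideanSpace.single i 1) = if i = j then 2 * (z j - p j) else 0 := by
    intro j
    rw [ContinuousLinearMap.smul_apply]
    have : (EuclideanSpace.proj (𝕜 := ℝ) j) (EuclideanSpace.single i (1:ℝ))
        = (EuclideanSpace.single i (1:ℝ)) j := rfl
    rw [this, EuclideanSpace.single_apply]
    by_cases h : j = i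
    · subst h; simp
    · simp [h, Ne.symm h]
  rw [Finset.sum_congr rfl (fun j _ => this j)]
  rw [Finset.sum_ite_eq Finset.univ i (fun j => 2 * (z j - p j))]
  simp

lemma hasFDerivAt_qf (p z : Rn m) : HasFDerivAt (qf p) (Dq p z) z := by
  unfold qf Dq
  apply HasFDerivAt.fun_sum
  intro j _
  have h1 : HasFDerivAt (fun w : Rn m => w j - p j) (EuclideanSpace.proj (𝕜 := ℝ) j) z := by
    simpa using ((EuclideanSpace.proj (𝕜 := ℝ) j).hasFDerivAt (x := z)).sub_const (p j)
  have h2 := (hasDerivAt_pow 2 (z j - p j)).comp_hasFDerivAt z h1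
  exact h2

lemma contDiff_qf (p : Rn m) : ContDiff ℝ 2 (qf p) := by
  unfold qf
  apply ContDiff.sum
  intro j _
  have h1 : ContDiff ℝ 2 (fun w : Rn m => w j) := (EuclideanSpace.proj (𝕜 := ℝ) j).contDiff
  exact (h1.sub contDiff_const).pow 2

lemma qf_eq_norm (p : Rn m) (z : Rn m) : qf p z = ‖z - p‖^2 := by
  rw [EuclideanSpace.norm_eq, Real.sq_sqrt (by positivity)]
  unfold qf
  congr 1
  funext j
  rw [Real.norm_eq_abs, sq_abs, PiLp.sub_apply]

section W
variable (p : Rn m) (r : ℝ)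

def Wf : Rn m → ℝ := fun z => (qf p z) ^ r

lemma contDiffAt_Wf {z : Rn m} (hq : 0 < qf p z) : ContDiffAt ℝ 2 (Wf p r) z := by
  exact (Real.contDiffAt_rpow_const_of_ne (ne_of_gt hq)).comp z (contDiff_qf p).contDiffAt

lemma hasFDerivAt_Wf {z : Rn m} (hq : 0 < qf p z) :
    HasFDerivAt (Wf p r) ((r * (qf p z) ^ (r - 1)) • Dq p z) z := by
  have h := (Real.hasDerivAt_rpow_const (p := r) (Or.inl (ne_of_gt hq))).comp_hasFDerivAt z
    (hasFDerivAt_qf p z)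
  exact h

lemma fderiv_Wf {z : Rn m} (hq : 0 < qf p z) (i : Fin m) :
    fderiv ℝ (Wf p r) z (EuclideanSpace.single i 1)
      = r * (qf p z) ^ (r - 1) * (2 * (z i - p i)) := by
  rw [(hasFDerivAt_Wf p r hq).fderiv]
  rw [ContinuousLinearMap.smul_apply, Dq_apply]
  simp [mul_comm, mul_assoc]

lemma dd_Wf {z : Rn m} (hq : 0 < qf p z) (i : Fin m) :
    fderiv ℝ (fun w => fderiv ℝ (Wf p r) w (EuclideanSpace.single i 1)) z
      (EuclideanSpace.single i 1)
      = r * ((r-1) * (qf p z) ^ (r - 2) * (2 * (z i - p i)) * (2 * (z i - p i))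
          + (qf p z) ^ (r - 1) * 2) := by
  have hopen : IsOpen {w : Rn m | 0 < qf p w} :=
    isOpen_lt continuous_const (contDiff_qf p).continuous
  have hev : (fun w => fderiv ℝ (Wf p r) w (EuclideanSpace.single i 1))
      =ᶠ[nhds z] (fun w => r * ((qf p w) ^ (r - 1) * (2 * (w i - p i)))) := by
    filter_upwards [hopen.mem_nhds hq] with w hw
    rw [fderiv_Wf p r hw i]
    ring
  rw [hev.fderiv_eq]
  -- differentiate the explicit function
  have h1 : HasFDerivAt (fun w : Rn m => (qf p w) ^ (r-1))
      (((r-1) * (qf p z) ^ (r - 1 - 1)) • Dq p z) z :=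
    (Real.hasDerivAt_rpow_const (p := r-1) (Or.inl (ne_of_gt hq))).comp_hasFDerivAt z
      (hasFDerivAt_qf p z)
  have h2 : HasFDerivAt (fun w : Rn m => w i - p i) (EuclideanSpace.proj (𝕜 := ℝ) i) z := by
    simpa using ((EuclideanSpace.proj (𝕜 := ℝ) i).hasFDerivAt (x := z)).sub_const (p i)
  have h2' : HasFDerivAt (fun w : Rn m => 2 * (w i - p i))
      ((2:ℝ) • EuclideanSpace.proj (𝕜 := ℝ) i) z := h2.const_mul 2
  have h3 := (h1.mul h2')
  have h4 : HasFDerivAt (fun w : Rn m => r * ((qf p w) ^ (r-1) * (2 * (w i - p i)))) _ z :=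
    h3.const_mul r
  rw [h4.fderiv]
  have hproj : (EuclideanSpace.proj (𝕜 := ℝ) i) (EuclideanSpace.single i (1:ℝ)) = 1 := by
    have : (EuclideanSpace.proj (𝕜 := ℝ) i) (EuclideanSpace.single i (1:ℝ))
        = (EuclideanSpace.single i (1:ℝ)) i := rfl
    rw [this, EuclideanSpace.single_apply]
    simp
  have hr : r - 1 - 1 = r - 2 := by ring
  simp only [ContinuousLinearMap.smul_apply, ContinuousLinearMap.add_apply, Dq_apply,
    hproj, hr, smul_eq_mul]
  ring

lemma lap_Wf {z : Rn m} (hq : 0 < qf p z) :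
    lap (Wf p r) z
      = 4 * r * (r-1) * (qf p z) ^ (r - 1) + 2 * m * r * (qf p z) ^ (r - 1) := by
  unfold lap
  rw [Finset.sum_congr rfl (fun i _ => dd_Wf p r hq i)]
  have hsum : ∑ i : Fin m, (z i - p i) * (z i - p i) = qf p z := by
    unfold qf; congr 1; funext i; ring
  have expand : ∀ i : Fin m,
      r * ((r-1) * (qf p z) ^ (r - 2) * (2 * (z i - p i)) * (2 * (z i - p i))
          + (qf p z) ^ (r - 1) * 2)
      = (4 * r * (r-1) * (qf p z) ^ (r - 2)) * ((z i - p i) * (z i - p i))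
        + 2 * r * (qf p z) ^ (r - 1) := by
    intro i; ring
  rw [Finset.sum_congr rfl (fun i _ => expand i), Finset.sum_add_distrib, ← Finset.mul_sum,
    hsum, Finset.sum_const, Finset.card_univ]
  have hq2 : (qf p z) ^ (r - 2) * qf p z = (qf p z) ^ (r - 1) := by
    have h := Real.rpow_natCast (qf p z) 1
    have : (qf p z) ^ (r - 2) * (qf p z) ^ (1:ℝ) = (qf p z) ^ (r - 1) := by
      rw [← Real.rpow_add hq]; congr 1; ring
    rw [← this, Real.rpow_one]
  rw [mul_assoc (4 * r * (r-1)), hq2]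
  simp [Fintype.card_fin, nsmul_eq_mul]
  ring

end W

variable {n : ℕ}

def projL (n : ℕ) : Rn (n+1) →L[ℝ] ℝ := EuclideanSpace.proj (𝕜 := ℝ) (Fin.last n)

lemma projL_apply (z : Rn (n+1)) : projL n z = ycoord z := rfl

lemma hasFDerivAt_ycoord (z : Rn (n+1)) : HasFDerivAt (ycoord (n := n)) (projL n) z :=
  (projL n).hasFDerivAt

lemma projL_single_last : projL n (EuclideanSpace.single (Fin.last n) (1:ℝ)) = 1 := by
  rw [projL_apply]
  unfold ycoord
  rw [EuclideanSpace.single_apply]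
  simp

lemma projL_single_cast (j : Fin n) :
    projL n (EuclideanSpace.single j.castSucc (1:ℝ)) = 0 := by
  rw [projL_apply]
  unfold ycoord
  rw [EuclideanSpace.single_apply]
  simp [(Fin.castSucc_lt_last j).ne']

def Phif (n : ℕ) (b : ℝ) : Rn (n+1) → ℝ := fun z => (ycoord z) ^ b

lemma contDiffAt_Phif {b : ℝ} {z : Rn (n+1)} (hy : ycoord z ≠ 0) :
    ContDiffAt ℝ 2 (Phif n b) z :=
  (Real.contDiffAt_rpow_const_of_ne hy).comp z ((projL n).contDiff).contDiffAt

lemma hasFDerivAt_Phif {b : ℝ} {z : Rn (n+1)} (hy : ycoord z ≠ 0) :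
    HasFDerivAt (Phif n b) ((b * (ycoord z) ^ (b-1)) • projL n) z :=
  (Real.hasDerivAt_rpow_const (Or.inl hy)).comp_hasFDerivAt z (hasFDerivAt_ycoord z)

lemma pdy_Phif {b : ℝ} {z : Rn (n+1)} (hy : ycoord z ≠ 0) :
    pdy (Phif n b) z = b * (ycoord z) ^ (b-1) := by
  unfold pdy
  rw [(hasFDerivAt_Phif hy).fderiv, ContinuousLinearMap.smul_apply, projL_single_last]
  simp

lemma isOpen_yne : IsOpen {z : Rn (n+1) | ycoord z ≠ 0} := by
  have : Continuous (ycoord (n := n)) := (projL n).continuous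
  exact isOpen_ne_fun this continuous_const

lemma dd_Phif_cast {b : ℝ} {z : Rn (n+1)} (hy : ycoord z ≠ 0) (j : Fin n) :
    fderiv ℝ (fun w => fderiv ℝ (Phif n b) w (EuclideanSpace.single j.castSucc 1)) z
      (EuclideanSpace.single j.castSucc 1) = 0 := by
  have hev : (fun w => fderiv ℝ (Phif n b) w (EuclideanSpace.single j.castSucc 1))
      =ᶠ[nhds z] (fun _ => (0:ℝ)) := by
    filter_upwards [isOpen_yne.mem_nhds hy] with w hw
    rw [(hasFDerivAt_Phif hw).fderiv, ContinuousLinearMap.smul_apply, projL_single_cast]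
    simp
  rw [hev.fderiv_eq, fderiv_fun_const]
  simp

lemma dd_Phif_last {b : ℝ} {z : Rn (n+1)} (hy : ycoord z ≠ 0) :
    fderiv ℝ (fun w => fderiv ℝ (Phif n b) w (EuclideanSpace.single (Fin.last n) 1)) z
      (EuclideanSpace.single (Fin.last n) 1) = b * (b-1) * (ycoord z) ^ (b-2) := by
  have hev : (fun w => fderiv ℝ (Phif n b) w (EuclideanSpace.single (Fin.last n) 1))
      =ᶠ[nhds z] (fun w => b * (ycoord w) ^ (b-1)) := by
    filter_upwards [isOpen_yne.mem_nhds hy] with w hw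
    rw [(hasFDerivAt_Phif hw).fderiv, ContinuousLinearMap.smul_apply, projL_single_last]
    simp
  rw [hev.fderiv_eq]
  have h1 : HasFDerivAt (fun w : Rn (n+1) => (ycoord w) ^ (b-1))
      (((b-1) * (ycoord z) ^ (b-1-1)) • projL n) z :=
    (Real.hasDerivAt_rpow_const (Or.inl hy)).comp_hasFDerivAt z (hasFDerivAt_ycoord z)
  have h2 := h1.const_mul b
  rw [h2.fderiv]
  have hr : b - 1 - 1 = b - 2 := by ring
  simp only [ContinuousLinearMap.smul_apply, projL_single_last, hr, smul_eq_mul]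
  ring

lemma lap_Phif {b : ℝ} {z : Rn (n+1)} (hy : ycoord z ≠ 0) :
    lap (Phif n b) z = b * (b-1) * (ycoord z) ^ (b-2) := by
  unfold lap
  rw [Fin.sum_univ_castSucc]
  rw [Finset.sum_congr rfl (fun j _ => dd_Phif_cast hy j), dd_Phif_last hy]
  simp


lemma pdy_Wf {n : ℕ} (p : Rn (n+1)) (r : ℝ) {z : Rn (n+1)} (hq : 0 < qf p z)
    (hp : ycoord p = 0) :
    pdy (Wf p r) z = r * (qf p z) ^ (r - 1) * (2 * ycoord z) := by
  unfold pdy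
  rw [fderiv_Wf p r hq (Fin.last n)]
  have h1 : z (Fin.last n) = ycoord z := rfl
  have h2 : p (Fin.last n) = 0 := hp
  rw [h1, h2, sub_zero]

lemma interior_contradiction {n : ℕ} {a : ℝ} (ha2 : a < 1)
    {u : Rn (n+1) → ℝ} {z : Rn (n+1)} (hC2u : ContDiffAt ℝ 2 u z)
    (p : Rn (n+1)) (hp : ycoord p = 0) {c₀ ε : ℝ} (hc₀ : 0 < c₀) (hε : 0 < ε)
    (hy : 0 < ycoord z) (hq : 0 < qf p z)
    (hEq : |ycoord z| * lap u z + a * Real.sign (ycoord z) * pdy u z = 0)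
    (hmax : IsLocalMax
      (fun w => u w + (c₀ * Wf p (-(((n:ℝ)+1)/2)) w + ε * Phif n (1-a) w)) z) :
    False := by
  set r : ℝ := -(((n:ℝ)+1)/2) with hrdef
  set b : ℝ := 1 - a with hbdef
  set v : Rn (n+1) → ℝ := fun w => u w + (c₀ * Wf p r w + ε * Phif n b w) with hvdef
  have hyne : ycoord z ≠ 0 := hy.ne'
  have hWc2 : ContDiffAt ℝ 2 (Wf p r) z := contDiffAt_Wf p r hq
  have hφc2 : ContDiffAt ℝ 2 (Phif n b) z := contDiffAt_Phif hyne
  have hvC2 : ContDiffAt ℝ 2 v z :=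
    hC2u.add (((contDiffAt_const (c := c₀)).mul hWc2).add ((contDiffAt_const (c := ε)).mul hφc2))
  -- upper bound from the maximum
  have hlapv : lap v z ≤ 0 := by
    unfold lap
    exact Finset.sum_nonpos fun i _ => second_deriv_test hvC2 hmax _
  have hpdyv : pdy v z = 0 := by
    unfold pdy
    rw [hmax.fderiv_eq_zero]
    simp
  have hTle : ycoord z * lap v z + a * pdy v z ≤ 0 := by
    rw [hpdyv, mul_zero, add_zero]
    exact mul_nonpos_of_nonneg_of_nonpos hy.le hlapv
  -- explicit computation
  have hlapcomb := lap_comb hC2u hWc2 hφc2 c₀ ε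
  have hpdycomb := pdy_comb (g := Wf p r) (h := Phif n b) (hC2u.differentiableAt two_ne_zero)
    ((hasFDerivAt_Wf p r hq).differentiableAt)
    ((hasFDerivAt_Phif (b := b) hyne).differentiableAt) c₀ ε
  have hEq' : ycoord z * lap u z + a * pdy u z = 0 := by
    rw [abs_of_pos hy, Real.sign_of_pos hy] at hEq
    linarith [hEq]
  have hyb : (ycoord z) ^ (b-1) = (ycoord z) ^ (b-2) * ycoord z := by
    rw [show b - 1 = (b-2) + 1 by ring, Real.rpow_add hy, Real.rpow_one]
  have hQpos : 0 < (qf p z) ^ (r - 1) := Real.rpow_pos_of_pos hq _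
  have hTval : ycoord z * lap v z + a * pdy v z
      = c₀ * (qf p z) ^ (r-1) * ycoord z * (((n:ℝ)+1) * (2-a)) := by
    rw [hlapcomb, hpdycomb, lap_Wf p r hq, pdy_Wf p r hq hp, lap_Phif hyne, pdy_Phif hyne,
      hyb]
    have hcast : ((n+1 : ℕ) : ℝ) = (n:ℝ) + 1 := by push_cast; ring
    rw [hcast]
    rw [hrdef, hbdef]
    nlinarith [hEq', sq_nonneg (ycoord z)]
  have : 0 < c₀ * (qf p z) ^ (r-1) * ycoord z * (((n:ℝ)+1) * (2-a)) := by
    have h2 : (0:ℝ) < 2 - a := by linarith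
    have h1 : (0:ℝ) < ((n:ℝ)+1) * (2-a) := mul_pos (by positivity) h2
    exact mul_pos (mul_pos (mul_pos hc₀ hQpos) hy) h1
  rw [hTval] at hTle
  linarith

lemma emb_sub {n : ℕ} (x x' : Rn n) (y y' : ℝ) :
    emb x y - emb x' y' = emb (x - x') (y - y') := by
  ext i
  rw [PiLp.sub_apply]
  refine Fin.lastCases ?_ ?_ i
  · simp [emb]
  · intro j; simp [emb, Fin.snoc_castSucc, PiLp.sub_apply]

lemma norm_emb {n : ℕ} (x : Rn n) (y : ℝ) : ‖emb x y‖^2 = ‖x‖^2 + y^2 := by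
  rw [norm_sq_split (emb x y), xpart_emb, ycoord_emb]

lemma isOpen_U {n : ℕ} {Ω : Set (Rn n)} (hΩ : IsOpen Ω) :
    IsOpen {z : Rn (n+1) | xpart z ∈ Ω ∧ 0 < ycoord z} := by
  have h1 : {z : Rn (n+1) | xpart z ∈ Ω ∧ 0 < ycoord z}
      = xpart ⁻¹' Ω ∩ ycoord ⁻¹' (Set.Ioi 0) := rfl
  rw [h1]
  exact (hΩ.preimage continuous_xpart).inter (isOpen_Ioi.preimage continuous_ycoord)

lemma contOn_v {n : ℕ} {Ω : Set (Rn n)} {u : Rn (n+1) → ℝ}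
    (hcont : ContinuousOn u {z | xpart z ∈ Ω ∧ 0 ≤ ycoord z})
    (p : Rn (n+1)) (c₀ ε r b : ℝ) (hb : 0 < b) :
    ContinuousOn (fun w => u w + (c₀ * Wf p r w + ε * Phif n b w))
      {z | (xpart z ∈ Ω ∧ 0 ≤ ycoord z) ∧ 0 < qf p z} := by
  apply ContinuousOn.add
  · exact hcont.mono (fun z hz => hz.1)
  apply ContinuousOn.add
  · apply continuousOn_const.mul
    intro z hz
    exact ((Real.continuousAt_rpow_const _ r (Or.inl hz.2.ne')).comp
      ((contDiff_qf p).continuous.continuousAt)).continuousWithinAt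
  · apply continuousOn_const.mul
    intro z hz
    exact ((Real.continuousAt_rpow_const _ b (Or.inr hb.le)).comp
      (continuous_ycoord.continuousAt)).continuousWithinAt

set_option maxHeartbeats 800000 in
lemma bottom_contradiction {n : ℕ} {a lam : ℝ} (ha1 : -1 < a) (ha2 : a < 1)
    {Ω : Set (Rn n)} (hΩo : IsOpen Ω) {u : Rn (n+1) → ℝ}
    (hcont : ContinuousOn u {z | xpart z ∈ Ω ∧ 0 ≤ ycoord z})
    (hC2 : ContDiffOn ℝ 2 u {z | xpart z ∈ Ω ∧ 0 < ycoord z})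
    (hconv : TendstoLocallyUniformlyOn (fun y x => y ^ a * pdy u (emb x y))
      (fun x => -lam * max (u (emb x 0)) 0) (nhdsWithin 0 (Set.Ioi 0)) Ω)
    (x₁ xs : Rn n) {ρ R c₀ ε : ℝ} (hρ : 0 < ρ) (hc₀ : 0 < c₀) (hε : 0 < ε)
    (hxs : xs ∈ Ω) (hu0 : u (emb xs 0) ≤ 0)
    (hd1 : ρ < ‖emb xs 0 - emb x₁ 0‖) (hd2 : ‖emb xs 0 - emb x₁ 0‖ < R)
    (hmax : IsMaxOn (fun w => u w + (c₀ * Wf (emb x₁ 0) (-(((n:ℝ)+1)/2)) w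
        + ε * Phif n (1-a) w))
      {z | ρ ≤ ‖z - emb x₁ 0‖ ∧ ‖z - emb x₁ 0‖ ≤ R ∧ 0 ≤ ycoord z} (emb xs 0)) :
    False := by
  set r : ℝ := -(((n:ℝ)+1)/2) with hrdef
  set b : ℝ := 1 - a with hbdef
  have hb : 0 < b := by rw [hbdef]; linarith
  set p : Rn (n+1) := emb x₁ 0 with hpdef
  set v : Rn (n+1) → ℝ := fun w => u w + (c₀ * Wf p r w + ε * Phif n b w) with hvdef
  set K : Set (Rn (n+1)) := {z | ρ ≤ ‖z - p‖ ∧ ‖z - p‖ ≤ R ∧ 0 ≤ ycoord z} with hKdef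
  set dK : ℝ := ‖emb xs 0 - p‖ with hdKdef
  have hdKpos : 0 < dK := lt_trans hρ hd1
  have hRpos : 0 < R := lt_trans hdKpos hd2
  have hdK2 : dK^2 = ‖xs - x₁‖^2 := by
    rw [hdKdef, hpdef, emb_sub, norm_emb]
    norm_num
  have hq_emb : ∀ y : ℝ, qf p (emb xs y) = dK^2 + y^2 := by
    intro y
    rw [qf_eq_norm, hpdef, emb_sub, norm_emb, ← hdK2]
    norm_num
  have hnorm_emb : ∀ y : ℝ, ‖emb xs y - p‖^2 = dK^2 + y^2 := by
    intro y
    rw [hpdef, emb_sub, norm_emb, ← hdK2]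
    norm_num
  -- pointwise Neumann limit
  have hlim_u : Filter.Tendsto (fun y => y ^ a * pdy u (emb xs y))
      (nhdsWithin 0 (Set.Ioi 0)) (nhds 0) := by
    have h := hconv.tendsto_at hxs
    have h0 : -lam * max (u (emb xs 0)) 0 = 0 := by
      rw [max_eq_right hu0, mul_zero]
    rwa [h0] at h
  have hlim_q : Filter.Tendsto (fun y : ℝ => (dK^2 + y^2) ^ (r-1))
      (nhdsWithin 0 (Set.Ioi 0)) (nhds ((dK^2) ^ (r-1))) := by
    have h1 : Filter.Tendsto (fun y : ℝ => dK^2 + y^2) (nhds 0) (nhds (dK^2)) := by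
      have hco : Continuous (fun y : ℝ => dK^2 + y^2) := by fun_prop
      simpa using hco.tendsto 0
    have h2 : ContinuousAt (fun t : ℝ => t ^ (r-1)) (dK^2) :=
      Real.continuousAt_rpow_const _ _ (Or.inl (by positivity))
    exact ((h2.tendsto.comp h1).mono_left nhdsWithin_le_nhds)
  have hlim_y : Filter.Tendsto (fun y : ℝ => y ^ (a+1))
      (nhdsWithin 0 (Set.Ioi 0)) (nhds 0) := by
    have h1 : ContinuousAt (fun y : ℝ => y ^ (a+1)) 0 :=
      Real.continuousAt_rpow_const 0 (a+1) (Or.inr (by linarith))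
    have h2 := h1.tendsto
    rw [Real.zero_rpow (by linarith : a + 1 ≠ 0)] at h2
    exact h2.mono_left nhdsWithin_le_nhds
  -- the function F
  have hdiffv : ∀ y : ℝ, 0 < y →
      pdy v (emb xs y) = pdy u (emb xs y)
        + (c₀ * (r * (dK^2 + y^2) ^ (r-1) * (2 * y)) + ε * (b * y ^ (b-1))) := by
    intro y hy
    have hqy : 0 < qf p (emb xs y) := by rw [hq_emb]; positivity
    have hyy : ycoord (emb xs y) = y := ycoord_emb xs y
    have hyne : ycoord (emb xs y) ≠ 0 := by rw [hyy]; exact hy.ne'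
    have hmemU : emb xs y ∈ {z : Rn (n+1) | xpart z ∈ Ω ∧ 0 < ycoord z} := by
      constructor
      · rw [xpart_emb]; exact hxs
      · rw [hyy]; exact hy
    have hdu : DifferentiableAt ℝ u (emb xs y) :=
      ((hC2.differentiableOn (by norm_num)).differentiableAt
        ((isOpen_U hΩo).mem_nhds hmemU))
    have h := pdy_comb (g := Wf p r) (h := Phif n b) hdu
      ((hasFDerivAt_Wf p r hqy).differentiableAt)
      ((hasFDerivAt_Phif (b := b) hyne).differentiableAt) c₀ ε
    rw [hvdef] at *
    rw [h, pdy_Wf p r hqy (by rw [hpdef]; exact ycoord_emb x₁ 0), pdy_Phif hyne,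
      hq_emb, hyy]
  have hFeq : ∀ y ∈ Set.Ioi (0:ℝ),
      y ^ a * pdy v (emb xs y)
        = y ^ a * pdy u (emb xs y)
          + (2 * c₀ * r) * ((dK^2 + y^2) ^ (r-1) * y ^ (a+1)) + ε * b := by
    intro y hy
    have hy0 : (0:ℝ) < y := hy
    rw [hdiffv y hy0]
    have h1 : y ^ (a+1) = y ^ a * y := by
      rw [Real.rpow_add hy0, Real.rpow_one]
    have h2 : y ^ a * y ^ (b-1) = 1 := by
      rw [← Real.rpow_add hy0, show a + (b-1) = 0 by rw [hbdef]; ring, Real.rpow_zero]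
    have h3 : y ^ a * (ε * (b * y ^ (b-1))) = ε * b := by
      calc y ^ a * (ε * (b * y ^ (b-1))) = ε * b * (y ^ a * y ^ (b-1)) := by ring
      _ = ε * b := by rw [h2, mul_one]
    rw [mul_add, mul_add, h3, h1]
    ring
  have hF : Filter.Tendsto (fun y => y ^ a * pdy v (emb xs y))
      (nhdsWithin 0 (Set.Ioi 0)) (nhds (ε * b)) := by
    have hsum := (hlim_u.add ((hlim_q.mul hlim_y).const_mul (2 * c₀ * r))).add
      tendsto_const_nhds (b := ε * b)
    have hval : (0 + (2 * c₀ * r) * ((dK^2) ^ (r-1) * 0) + ε * b) = ε * b := by ring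
    rw [hval] at hsum
    apply hsum.congr'
    filter_upwards [self_mem_nhdsWithin] with y hy
    rw [hFeq y hy]
  have hεb : (0:ℝ) < ε * b := mul_pos hε hb
  have hFpos : ∀ᶠ y in nhdsWithin 0 (Set.Ioi 0), 0 < y ^ a * pdy v (emb xs y) :=
    hF.eventually (eventually_gt_nhds hεb)
  have hpdypos : ∀ᶠ y in nhdsWithin 0 (Set.Ioi 0), 0 < pdy v (emb xs y) := by
    filter_upwards [hFpos, self_mem_nhdsWithin] with y h1 h2
    have hya : 0 < y ^ a := Real.rpow_pos_of_pos h2 a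
    by_contra hle
    push_neg at hle
    nlinarith
  obtain ⟨δ, hδpos, hδ⟩ := Metric.mem_nhdsWithin_iff.mp hpdypos
  have hRd : 0 < R^2 - dK^2 := by nlinarith
  set η : ℝ := min (δ/2) (Real.sqrt (R^2 - dK^2) / 2) with hηdef
  have hηpos : 0 < η := by
    apply lt_min (by linarith)
    have := Real.sqrt_pos.mpr hRd
    linarith
  have hηsq : ∀ y ∈ Set.Icc (0:ℝ) η, dK^2 + y^2 ≤ R^2 := by
    intro y hy
    have h1 : y ≤ Real.sqrt (R^2 - dK^2) / 2 := le_trans hy.2 (min_le_right _ _)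
    have h2 := Real.sq_sqrt hRd.le
    nlinarith [hy.1, Real.sqrt_nonneg (R^2 - dK^2)]
  have hKmem : ∀ y ∈ Set.Icc (0:ℝ) η, emb xs y ∈ K := by
    intro y hy
    have hN := hnorm_emb y
    have hNnonneg : 0 ≤ ‖emb xs y - p‖ := norm_nonneg _
    refine ⟨?_, ?_, ?_⟩
    · nlinarith [hρ.le, hd1.le, hy.1]
    · nlinarith [hηsq y hy]
    · rw [ycoord_emb]; exact hy.1
  -- continuity of g on [0, η]
  set g : ℝ → ℝ := fun y => v (emb xs y) with hgdef
  have hcontg : ContinuousOn g (Set.Icc 0 η) := by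
    have hmaps : Set.MapsTo (fun y : ℝ => emb xs y) (Set.Icc 0 η)
        {z | (xpart z ∈ Ω ∧ 0 ≤ ycoord z) ∧ 0 < qf p z} := by
      intro y hy
      refine ⟨⟨?_, ?_⟩, ?_⟩
      · rw [xpart_emb]; exact hxs
      · rw [ycoord_emb]; exact hy.1
      · rw [hq_emb]; positivity
    exact ContinuousOn.comp (contOn_v hcont p c₀ ε r b hb)
      (continuous_emb xs).continuousOn hmaps
  have hderg : ∀ y ∈ Set.Ioo (0:ℝ) η, HasDerivAt g (pdy v (emb xs y)) y := by
    intro y hy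
    have hy0 : (0:ℝ) < y := hy.1
    have hqy : 0 < qf p (emb xs y) := by rw [hq_emb]; positivity
    have hyy : ycoord (emb xs y) = y := ycoord_emb xs y
    have hyne : ycoord (emb xs y) ≠ 0 := by rw [hyy]; exact hy0.ne'
    have hmemU : emb xs y ∈ {z : Rn (n+1) | xpart z ∈ Ω ∧ 0 < ycoord z} :=
      ⟨by rw [xpart_emb]; exact hxs, by rw [hyy]; exact hy0⟩
    have hdu : DifferentiableAt ℝ u (emb xs y) :=
      ((hC2.differentiableOn (by norm_num)).differentiableAt
        ((isOpen_U hΩo).mem_nhds hmemU))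
    have hdv : DifferentiableAt ℝ v (emb xs y) := by
      apply hdu.add
      apply DifferentiableAt.add
      · exact ((hasFDerivAt_Wf p r hqy).differentiableAt).const_mul c₀
      · exact ((hasFDerivAt_Phif (b := b) hyne).differentiableAt).const_mul ε
    exact hdv.hasFDerivAt.comp_hasDerivAt y (hasDerivAt_emb xs y)
  have hmono : StrictMonoOn g (Set.Icc 0 η) := by
    apply strictMonoOn_of_deriv_pos (convex_Icc 0 η) hcontg
    intro y hy
    rw [interior_Icc] at hy
    rw [(hderg y hy).deriv]
    apply hδ
    constructor
    · rw [Metric.mem_ball, Real.dist_eq, sub_zero, abs_of_pos hy.1]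
      have : η ≤ δ/2 := min_le_left _ _
      linarith [hy.2]
    · exact hy.1
  have hlt : g 0 < g η := hmono ⟨le_rfl, hηpos.le⟩ ⟨hηpos.le, le_rfl⟩ hηpos
  have hle : g η ≤ g 0 := by
    have h1 := isMaxOn_iff.mp hmax (emb xs η) (hKmem η ⟨hηpos.le, le_rfl⟩)
    have h2 : emb xs 0 = emb xs 0 := rfl
    exact h1
  linarith

lemma norm_emb_zero {n : ℕ} (x : Rn n) : ‖emb x 0‖ = ‖x‖ := by
  have h := norm_emb x 0
  have h2 : ‖emb x 0‖^2 = ‖x‖^2 := by rw [h]; norm_num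
  calc ‖emb x 0‖ = Real.sqrt (‖emb x 0‖^2) := (Real.sqrt_sq (norm_nonneg _)).symm
  _ = Real.sqrt (‖x‖^2) := by rw [h2]
  _ = ‖x‖ := Real.sqrt_sq (norm_nonneg _)

lemma continuous_emb_zero {n : ℕ} : Continuous (fun x : Rn n => emb x 0) := by
  have hlip : LipschitzWith 1 (fun x : Rn n => emb x 0) := by
    apply LipschitzWith.of_dist_le_mul
    intro x x'
    have e1 : emb x 0 - emb x' 0 = emb (x - x') 0 := by rw [emb_sub]; norm_num
    rw [dist_eq_norm, dist_eq_norm, e1, norm_emb_zero]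
    simp
  exact hlip.continuous

lemma mono_in_y {n : ℕ} {Ω : Set (Rn n)} (hΩo : IsOpen Ω) {u : Rn (n+1) → ℝ}
    (hcont : ContinuousOn u {z | xpart z ∈ Ω ∧ 0 ≤ ycoord z})
    (hC2 : ContDiffOn ℝ 2 u {z | xpart z ∈ Ω ∧ 0 < ycoord z})
    (hpdy : ∀ x ∈ Ω, ∀ y : ℝ, 0 < y → pdy u (emb x y) ≤ 0)
    {x : Rn n} (hx : x ∈ Ω) {y : ℝ} (hy : 0 ≤ y) :
    u (emb x y) ≤ u (emb x 0) := by
  rcases eq_or_lt_of_le hy with h0 | hypos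
  · rw [← h0]
  · have hder : ∀ t ∈ Set.Ioo (0:ℝ) y, HasDerivAt (fun t => u (emb x t)) (pdy u (emb x t)) t := by
      intro t ht
      have hmem : emb x t ∈ {z : Rn (n+1) | xpart z ∈ Ω ∧ 0 < ycoord z} :=
        ⟨by rw [xpart_emb]; exact hx, by rw [ycoord_emb]; exact ht.1⟩
      have hdu := (hC2.differentiableOn (by norm_num)).differentiableAt
        ((isOpen_U hΩo).mem_nhds hmem)
      exact hdu.hasFDerivAt.comp_hasDerivAt t (hasDerivAt_emb x t)
    have hanti : AntitoneOn (fun t => u (emb x t)) (Set.Icc 0 y) := by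
      apply antitoneOn_of_deriv_nonpos (convex_Icc 0 y)
      · apply hcont.comp (continuous_emb x).continuousOn
        intro t ht
        exact ⟨by rw [xpart_emb]; exact hx, by rw [ycoord_emb]; exact ht.1⟩
      · intro t ht
        rw [interior_Icc] at ht
        exact (hder t ht).differentiableAt.differentiableWithinAt
      · intro t ht
        rw [interior_Icc] at ht
        rw [(hder t ht).deriv]
        exact hpdy x hx t ht.1
    exact hanti ⟨le_rfl, hy⟩ ⟨hy, le_rfl⟩ hy

end S5

set_option maxHeartbeats 2000000 in
/-- Proposition 5.1: if `u` solves the extension form of the fractional plasma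
equation on `Ω` and `∂_y u ≤ 0` on `Ω × (0,∞)`, then the boundary, relative to `Ω`, of
`{u(·,0) < 0}` is contained in the boundary, relative to `Ω`, of `{u(·,0) > 0}`. -/
theorem statement5 (n : ℕ) (hn : 1 ≤ n) (a : ℝ) (ha : a ∈ Set.Ioo (-1 : ℝ) 1)
    (lam : ℝ) (hlam : 0 < lam)
    (Ω : Set (Rn n)) (hΩ : IsOpen Ω) (u : Rn (n + 1) → ℝ)
    (hu : ExtSol a lam Ω u)
    (hmono : ∀ x ∈ Ω, ∀ y : ℝ, 0 < y → pdy u (emb x y) ≤ 0) :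
    Ω ∩ frontier {x ∈ Ω | u (emb x 0) < 0} ⊆ Ω ∩ frontier {x ∈ Ω | 0 < u (emb x 0)} := by
  classical
  obtain ⟨hcont, hah, hconv⟩ := hu
  obtain ⟨hC2, heq⟩ := hah
  have ha1 : -1 < a := ha.1
  have ha2 : a < 1 := ha.2
  have hb : (0:ℝ) < 1 - a := by linarith
  have hrneg : -(((n:ℝ)+1)/2) < 0 := by
    have : (0:ℝ) < ((n:ℝ)+1)/2 := by positivity
    linarith
  -- continuity of the trace
  have hf₀cont : ContinuousOn (fun x : Rn n => u (emb x 0)) Ω := by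
    apply hcont.comp S5.continuous_emb_zero.continuousOn
    intro x hx
    exact ⟨by rw [S5.xpart_emb]; exact hx, by simp [S5.ycoord_emb]⟩
  have hSeq : {x ∈ Ω | u (emb x 0) < 0}
      = Ω ∩ (fun x : Rn n => u (emb x 0)) ⁻¹' (Set.Iio 0) := rfl
  have hPeq : {x ∈ Ω | 0 < u (emb x 0)}
      = Ω ∩ (fun x : Rn n => u (emb x 0)) ⁻¹' (Set.Ioi 0) := rfl
  have hSopen : IsOpen {x ∈ Ω | u (emb x 0) < 0} := by
    rw [hSeq]; exact hf₀cont.isOpen_inter_preimage hΩ isOpen_Iio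
  have hPopen : IsOpen {x ∈ Ω | 0 < u (emb x 0)} := by
    rw [hPeq]; exact hf₀cont.isOpen_inter_preimage hΩ isOpen_Ioi
  rintro x₀ ⟨hx₀Ω, hx₀fr⟩
  rw [hSopen.frontier_eq] at hx₀fr
  obtain ⟨hx₀cl, hx₀nS⟩ := hx₀fr
  have hge : 0 ≤ u (emb x₀ 0) := by
    by_contra h
    push_neg at h
    exact hx₀nS ⟨hx₀Ω, h⟩
  have hca : ContinuousAt (fun x : Rn n => u (emb x 0)) x₀ :=
    hf₀cont.continuousAt (hΩ.mem_nhds hx₀Ω)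
  have hle : u (emb x₀ 0) ≤ 0 := by
    have hnb : (nhdsWithin x₀ {x ∈ Ω | u (emb x 0) < 0}).NeBot :=
      mem_closure_iff_nhdsWithin_neBot.mp hx₀cl
    have ht : Filter.Tendsto (fun x : Rn n => u (emb x 0))
        (nhdsWithin x₀ {x ∈ Ω | u (emb x 0) < 0}) (nhds (u (emb x₀ 0))) :=
      hca.tendsto.mono_left nhdsWithin_le_nhds
    exact le_of_tendsto ht (eventually_nhdsWithin_of_forall (fun x hx => hx.2.le))
  have hf₀x₀ : u (emb x₀ 0) = 0 := le_antisymm hle hge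
  refine ⟨hx₀Ω, ?_⟩
  rw [hPopen.frontier_eq]
  refine ⟨?_, fun hP => ?_⟩
  swap
  · have h2 := hP.2
    rw [hf₀x₀] at h2
    exact lt_irrefl 0 h2
  by_contra hnc
  rw [Metric.mem_closure_iff] at hnc
  push_neg at hnc
  obtain ⟨ε₀, hε₀pos, hε₀⟩ := hnc
  obtain ⟨ε₁, hε₁pos, hball₁⟩ := Metric.isOpen_iff.mp hΩ x₀ hx₀Ω
  set r₄ : ℝ := min (ε₀/2) (ε₁/2) with hr₄def
  have hr₄pos : 0 < r₄ := lt_min (by linarith) (by linarith)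
  have hballΩ : Metric.closedBall x₀ r₄ ⊆ Ω := by
    refine subset_trans (Metric.closedBall_subset_ball ?_) hball₁
    have := min_le_right (ε₀/2) (ε₁/2)
    rw [hr₄def]; linarith
  have hnonpos : ∀ x ∈ Metric.closedBall x₀ r₄, u (emb x 0) ≤ 0 := by
    intro x hx
    by_contra h
    push_neg at h
    have h1 := hε₀ x ⟨hballΩ hx, h⟩
    have h2 : dist x₀ x ≤ r₄ := by rw [dist_comm]; exact Metric.mem_closedBall.mp hx
    have h3 : r₄ ≤ ε₀/2 := min_le_left _ _
    linarith
  -- choose x₁ close to x₀ with u(x₁,0) < 0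
  obtain ⟨x₁, hx₁S, hx₁d⟩ := Metric.mem_closure_iff.mp hx₀cl (r₄/4) (by linarith)
  obtain ⟨hx₁Ω, hx₁neg⟩ := hx₁S
  set d : ℝ := dist x₀ x₁ with hddef
  have hdpos : 0 < d := by
    rw [hddef, dist_pos]
    intro he
    rw [he] at hf₀x₀
    linarith
  have hdr₄ : d < r₄/4 := hx₁d
  set mq : ℝ := -(u (emb x₁ 0)) / 2 with hmqdef
  have hmqpos : 0 < mq := by rw [hmqdef]; linarith
  have hca₁ : ContinuousAt (fun x : Rn n => u (emb x 0)) x₁ :=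
    hf₀cont.continuousAt (hΩ.mem_nhds hx₁Ω)
  have hev : ∀ᶠ x in nhds x₁, u (emb x 0) < -mq :=
    hca₁.tendsto.eventually (p := fun t => t < -mq)
      (eventually_lt_nhds (by rw [hmqdef]; linarith))
  obtain ⟨ρ₀, hρ₀pos, hρ₀⟩ := Metric.eventually_nhds_iff_ball.mp hev
  set ρ : ℝ := min (ρ₀/2) (d/2) with hρdef
  have hρpos : 0 < ρ := lt_min (by linarith) (by linarith)
  have hρd : ρ < d := by
    have := min_le_right (ρ₀/2) (d/2)
    rw [hρdef]; linarith
  set R : ℝ := 2*d with hRdef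
  have hdR : d < R := by rw [hRdef]; linarith
  have hρinner : ∀ x ∈ Metric.closedBall x₁ ρ, u (emb x 0) < -mq := by
    intro x hx
    apply hρ₀
    rw [Metric.mem_ball]
    have h1 : dist x x₁ ≤ ρ := Metric.mem_closedBall.mp hx
    have h2 : ρ ≤ ρ₀/2 := min_le_left _ _
    linarith
  set p : Rn (n+1) := emb x₁ 0 with hpdef
  set rr : ℝ := -(((n:ℝ)+1)/2) with hrrdef
  set bb : ℝ := 1 - a with hbbdef
  have hden : 0 < (ρ^2) ^ rr - (R^2) ^ rr := by
    have h1 : (ρ:ℝ)^2 < R^2 := by nlinarith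
    have := Real.rpow_lt_rpow_of_neg (x := ρ^2) (y := R^2) (z := rr) (by positivity) h1
      (by rw [hrrdef]; exact hrneg)
    linarith
  set c₀ : ℝ := mq / ((ρ^2) ^ rr - (R^2) ^ rr) with hc₀def
  have hc₀pos : 0 < c₀ := div_pos hmqpos hden
  set K : Set (Rn (n+1)) := {z | ρ ≤ ‖z - p‖ ∧ ‖z - p‖ ≤ R ∧ 0 ≤ ycoord z} with hKdef
  have hKclosed : IsClosed K := by
    have h1 : Continuous (fun z : Rn (n+1) => ‖z - p‖) :=
      (continuous_id.sub continuous_const).norm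
    have : K = {z : Rn (n+1) | ρ ≤ ‖z - p‖} ∩
        ({z | ‖z - p‖ ≤ R} ∩ {z | 0 ≤ ycoord z}) := rfl
    rw [this]
    exact (isClosed_le continuous_const h1).inter
      ((isClosed_le h1 continuous_const).inter
        (isClosed_le continuous_const S5.continuous_ycoord))
  have hKcompact : IsCompact K := by
    apply (isCompact_closedBall p R).of_isClosed_subset hKclosed
    intro z hz
    rw [Metric.mem_closedBall, dist_eq_norm]
    exact hz.2.1
  have hKx : ∀ z ∈ K, xpart z ∈ Metric.closedBall x₁ R := by
    intro z hz
    rw [Metric.mem_closedBall, dist_eq_norm]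
    have h1 : xpart z - x₁ = xpart (z - p) := by
      rw [S5.xpart_sub, hpdef, S5.xpart_emb]
    rw [h1]
    exact le_trans (S5.norm_xpart_le _) hz.2.1
  have hKball : ∀ z ∈ K, xpart z ∈ Metric.closedBall x₀ r₄ := by
    intro z hz
    rw [Metric.mem_closedBall]
    have h1 := Metric.mem_closedBall.mp (hKx z hz)
    have h2 : dist (xpart z) x₀ ≤ dist (xpart z) x₁ + dist x₁ x₀ := dist_triangle _ _ _
    have h3 : dist x₁ x₀ = d := by rw [dist_comm]
    rw [hRdef] at h1
    linarith
  have hKΩ : ∀ z ∈ K, xpart z ∈ Ω := fun z hz => hballΩ (hKball z hz)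
  have hKD : K ⊆ {z : Rn (n+1) | (xpart z ∈ Ω ∧ 0 ≤ ycoord z) ∧ 0 < S5.qf p z} := by
    intro z hz
    refine ⟨⟨hKΩ z hz, hz.2.2⟩, ?_⟩
    rw [S5.qf_eq_norm]
    have := hz.1
    nlinarith
  have hz₀norm : ‖emb x₀ 0 - p‖ = d := by
    rw [hpdef]
    have e1 : emb x₀ 0 - emb x₁ 0 = emb (x₀ - x₁) 0 := by rw [S5.emb_sub]; norm_num
    rw [e1, S5.norm_emb_zero, hddef, dist_eq_norm]
  have hz₀K : emb x₀ 0 ∈ K := by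
    refine ⟨?_, ?_, ?_⟩
    · rw [hz₀norm]; linarith
    · rw [hz₀norm]; linarith
    · simp [S5.ycoord_emb]
  -- the key estimate, for every ε > 0
  have key : ∀ ε : ℝ, 0 < ε →
      c₀ * (d^2) ^ rr ≤ c₀ * (R^2) ^ rr + ε * R ^ bb := by
    intro ε hε
    set v : Rn (n+1) → ℝ := fun w => u w + (c₀ * S5.Wf p rr w + ε * S5.Phif n bb w)
      with hvdef
    have hbb : 0 < bb := by rw [hbbdef]; linarith
    have hvcont : ContinuousOn v K := (S5.contOn_v hcont p c₀ ε rr bb hbb).mono hKD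
    obtain ⟨zs, hzsK, hzsmax⟩ := hKcompact.exists_isMaxOn ⟨emb x₀ 0, hz₀K⟩ hvcont
    have hMbound : v zs ≤ c₀ * (R^2) ^ rr + ε * R ^ bb := by
      obtain ⟨h1, h2, h3⟩ := hzsK
      have hqs : S5.qf p zs = ‖zs - p‖^2 := S5.qf_eq_norm p zs
      have hys : ycoord zs ≤ R := by
        have e1 : ycoord zs = ycoord (zs - p) := by
          rw [S5.ycoord_sub, hpdef, S5.ycoord_emb, sub_zero]
        rw [e1]
        exact le_trans (S5.ycoord_le_norm _) h2
      have hφbound : S5.Phif n bb zs ≤ R ^ bb := by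
        unfold S5.Phif
        exact Real.rpow_le_rpow h3 hys hbb.le
      have humono : u zs ≤ u (emb (xpart zs) 0) := by
        have e2 : zs = emb (xpart zs) (ycoord zs) := (S5.emb_xpart_ycoord zs).symm
        calc u zs = u (emb (xpart zs) (ycoord zs)) := by rw [← e2]
        _ ≤ u (emb (xpart zs) 0) := S5.mono_in_y hΩ hcont hC2 hmono (hKΩ zs ⟨h1, h2, h3⟩) h3
      rcases eq_or_lt_of_le h1 with hρeq | hρlt
      · -- inner sphere
        have hxmem : xpart zs ∈ Metric.closedBall x₁ ρ := by
          rw [Metric.mem_closedBall, dist_eq_norm]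
          have e1 : xpart zs - x₁ = xpart (zs - p) := by
            rw [S5.xpart_sub, hpdef, S5.xpart_emb]
          rw [e1]
          exact le_trans (S5.norm_xpart_le _) (le_of_eq hρeq.symm)
        have hus : u zs ≤ -mq := le_trans humono (hρinner _ hxmem).le
        have hW : c₀ * S5.Wf p rr zs = mq + c₀ * (R^2) ^ rr := by
          unfold S5.Wf
          rw [hqs, ← hρeq]
          have hcden : c₀ * ((ρ^2) ^ rr - (R^2) ^ rr) = mq :=
            div_mul_cancel₀ mq hden.ne'
          ring_nf
          ring_nf at hcden
          linarith
        calc v zs = u zs + (c₀ * S5.Wf p rr zs + ε * S5.Phif n bb zs) := rfl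
        _ ≤ -mq + ((mq + c₀ * (R^2) ^ rr) + ε * R ^ bb) := by
            rw [hW]
            have hmul : ε * S5.Phif n bb zs ≤ ε * R ^ bb :=
              mul_le_mul_of_nonneg_left hφbound hε.le
            linarith
        _ = c₀ * (R^2) ^ rr + ε * R ^ bb := by ring
      rcases eq_or_lt_of_le h2 with hReq | hRlt
      · -- outer sphere
        have hus : u zs ≤ 0 := le_trans humono (hnonpos _ (hKball zs ⟨h1, h2, h3⟩))
        have hW : c₀ * S5.Wf p rr zs = c₀ * (R^2) ^ rr := by
          unfold S5.Wf
          rw [hqs, hReq]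
        calc v zs = u zs + (c₀ * S5.Wf p rr zs + ε * S5.Phif n bb zs) := rfl
        _ ≤ 0 + (c₀ * (R^2) ^ rr + ε * R ^ bb) := by
            rw [hW]
            exact add_le_add hus (add_le_add le_rfl (mul_le_mul_of_nonneg_left hφbound hε.le))
        _ = c₀ * (R^2) ^ rr + ε * R ^ bb := by ring
      rcases eq_or_lt_of_le h3 with hy0 | hypos
      · -- bottom: contradiction
        exfalso
        have hzseq : emb (xpart zs) 0 = zs := by
          have := S5.emb_xpart_ycoord zs
          rw [← hy0] at this
          exact this
        have hd1' : ρ < ‖emb (xpart zs) 0 - emb x₁ 0‖ := by rw [hzseq, ← hpdef]; exact hρlt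
        have hd2' : ‖emb (xpart zs) 0 - emb x₁ 0‖ < R := by rw [hzseq, ← hpdef]; exact hRlt
        have hu0' : u (emb (xpart zs) 0) ≤ 0 := hnonpos _ (hKball zs ⟨h1, h2, h3⟩)
        have hmax' : IsMaxOn (fun w => u w + (c₀ * S5.Wf (emb x₁ 0) (-(((n:ℝ)+1)/2)) w
            + ε * S5.Phif n (1-a) w))
            {z | ρ ≤ ‖z - emb x₁ 0‖ ∧ ‖z - emb x₁ 0‖ ≤ R ∧ 0 ≤ ycoord z}
            (emb (xpart zs) 0) := by
          rw [← hrrdef, ← hbbdef, ← hpdef, hzseq]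
          exact hzsmax
        exact S5.bottom_contradiction ha1 ha2 hΩ hcont hC2 hconv x₁ (xpart zs)
          hρpos hc₀pos hε (hKΩ zs ⟨h1, h2, h3⟩) hu0' hd1' hd2' hmax'
      · -- interior: contradiction
        exfalso
        have hmemU : zs ∈ {z : Rn (n+1) | xpart z ∈ Ω ∧ 0 < ycoord z} :=
          ⟨hKΩ zs ⟨h1, h2, h3⟩, hypos⟩
        have hC2at : ContDiffAt ℝ 2 u zs :=
          hC2.contDiffAt ((S5.isOpen_U hΩ).mem_nhds hmemU)
        have hEqz := heq zs hmemU
        have hqpos : 0 < S5.qf p zs := by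
          rw [hqs]
          nlinarith
        have hO2 : IsOpen {z : Rn (n+1) | (ρ < ‖z - p‖ ∧ ‖z - p‖ < R) ∧ 0 < ycoord z} := by
          have hno : Continuous (fun z : Rn (n+1) => ‖z - p‖) :=
            (continuous_id.sub continuous_const).norm
          exact ((isOpen_lt continuous_const hno).inter
            (isOpen_lt hno continuous_const)).inter
            (isOpen_lt continuous_const S5.continuous_ycoord)
        have hloc : IsLocalMax v zs := by
          filter_upwards [hO2.mem_nhds ⟨⟨hρlt, hRlt⟩, hypos⟩] with w hw
          exact isMaxOn_iff.mp hzsmax w ⟨hw.1.1.le, hw.1.2.le, hw.2.le⟩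
        have hloc' : IsLocalMax (fun w => u w + (c₀ * S5.Wf p (-(((n:ℝ)+1)/2)) w
            + ε * S5.Phif n (1-a) w)) zs := by
          rw [← hrrdef, ← hbbdef]
          exact hloc
        have hpy : ycoord p = 0 := by rw [hpdef]; exact S5.ycoord_emb x₁ 0
        exact S5.interior_contradiction ha2 hC2at p hpy hc₀pos hε hypos hqpos hEqz hloc'
    -- combine
    have hvz₀ : v (emb x₀ 0) = c₀ * (d^2) ^ rr := by
      have hφ0 : S5.Phif n bb (emb x₀ 0) = 0 := by
        unfold S5.Phif
        rw [S5.ycoord_emb]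
        exact Real.zero_rpow hbb.ne'
      have hW0 : S5.Wf p rr (emb x₀ 0) = (d^2) ^ rr := by
        unfold S5.Wf
        rw [S5.qf_eq_norm, hz₀norm]
      show u (emb x₀ 0) + (c₀ * S5.Wf p rr (emb x₀ 0) + ε * S5.Phif n bb (emb x₀ 0))
          = c₀ * (d^2) ^ rr
      rw [hf₀x₀, hφ0, hW0]
      ring
    have hchain := isMaxOn_iff.mp hzsmax (emb x₀ 0) hz₀K
    rw [hvz₀] at hchain
    linarith
  -- let ε → 0
  have hRpos : 0 < R := by rw [hRdef]; linarith
  have hRb : 0 < R ^ bb := Real.rpow_pos_of_pos hRpos bb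
  have hfinal : c₀ * (d^2) ^ rr ≤ c₀ * (R^2) ^ rr := by
    apply le_of_forall_pos_le_add
    intro ε' hε'
    have h1 := key (ε'/R^bb) (by positivity)
    have h2 : (ε'/R^bb) * R^bb = ε' := div_mul_cancel₀ ε' hRb.ne'
    linarith
  have hstrict : (R^2) ^ rr < (d^2) ^ rr :=
    Real.rpow_lt_rpow_of_neg (by positivity) (by nlinarith)
      (by rw [hrrdef]; exact hrneg)
  nlinarith [hc₀pos, hfinal, hstrict]

end
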